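/- arXiv:2211.13475 — 4 statements merged into one kernel-verified Lean document; each statement's English description precedes it below -/
import Mathlib

section
/- Let h be a smooth vector-valued 1-form (endomorphism of the tangent bundle of a manifold N) which is a projector, h² = h, and define the curvature R(X,Y) = (1−h)[hX, hY] for vector fields X, Y. If hX and hY both lie in the nullity space of R (i.e. R(hX, Z) = 0 and R(hY, Z) = 0 for all Z), then R([hX,hY], Z) = 0 for all vector fields Z; i.e., the horizontal nullity space of R is involutive. -/
open scoped Manifold

local notation "∞" => (⊤ : ℕ∞)

variable {E : Type*} [NormedAddCommGroup E] [NormedSpace ℝ E]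
  {H : Type*} [TopologicalSpace H] {I : ModelWithCorners ℝ E H}
  {N : Type*} [TopologicalSpace N] [ChartedSpace H N] [IsManifold I ∞ N]

/-- Smooth vector fields on `N`, as derivations of the algebra of smooth functions. -/
local notation "χ" => Derivation ℝ C^∞⟮I, N; ℝ⟯ C^∞⟮I, N; ℝ⟯

/-- for a smooth projector field `h` on vector fields with curvature
`R(X,Y) = v ⁅h X, h Y⁆` (where `v = id - h`), if `h X` and `h Y` lie in the nullity space of
`R` then so does `⁅h X, h Y⁆`: the horizontal nullity space of the curvature is involutive. -/
theorem horizontal_nullity_space_involutive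
    (h : χ →ₗ[C^∞⟮I, N; ℝ⟯] χ) (hproj : ∀ X : χ, h (h X) = h X)
    (X Y : χ)
    (hX : ∀ Z : χ, ⁅h X, h Z⁆ - h ⁅h X, h Z⁆ = 0)
    (hY : ∀ Z : χ, ⁅h Y, h Z⁆ - h ⁅h Y, h Z⁆ = 0) :
    ∀ Z : χ, ⁅h ⁅h X, h Y⁆, h Z⁆ - h ⁅h ⁅h X, h Y⁆, h Z⁆ = 0 := by
  intro Z
  have kX : ∀ W : χ, h ⁅h X, h W⁆ = ⁅h X, h W⁆ := fun W => (sub_eq_zero.mp (hX W)).symm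
  have kY : ∀ W : χ, h ⁅h Y, h W⁆ = ⁅h Y, h W⁆ := fun W => (sub_eq_zero.mp (hY W)).symm
  have jac := lie_lie (h X) (h Y) (h Z)
  rw [kX Y, jac, map_sub]
  have hA := kX ⁅h Y, h Z⁆
  rw [kY Z] at hA
  have hB := kY ⁅h X, h Z⁆
  rw [kX Z] at hB
  rw [hA, hB, sub_self]
end

section
/- Suppose X and Y are vector fields in a commutative ideal of A_h = {Z : [Z,h] = 0} (so [X,Y] = 0 and [X,h] = [Y,h] = 0), where h is a projector with curvature R. Then [X, R(Y,Z)] = R(Y, [X,Z]) for all vector fields Z. -/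
open scoped Manifold

local notation "∞" => (⊤ : ℕ∞)

variable {E : Type*} [NormedAddCommGroup E] [NormedSpace ℝ E]
  {H : Type*} [TopologicalSpace H] {I : ModelWithCorners ℝ E H}
  {N : Type*} [TopologicalSpace N] [ChartedSpace H N] [IsManifold I ∞ N]

/-- Smooth vector fields on `N`, as derivations of the algebra of smooth functions. -/
local notation "χ" => Derivation ℝ C^∞⟮I, N; ℝ⟯ C^∞⟮I, N; ℝ⟯

private lemma aux_lie {L : Type*} [LieRing L] (h : L → L) (X Y Z : L)
    (hX : ∀ W, ⁅X, h W⁆ = h ⁅X, W⁆) (hXY : ⁅X, Y⁆ = 0) (h0 : h 0 = 0) :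
    ⁅X, ⁅h Y, h Z⁆ - h ⁅h Y, h Z⁆⁆ = ⁅h Y, h ⁅X, Z⁆⁆ - h ⁅h Y, h ⁅X, Z⁆⁆ := by
  have hXhY : ⁅X, h Y⁆ = 0 := by rw [hX, hXY, h0]
  have key : ⁅X, ⁅h Y, h Z⁆⁆ = ⁅h Y, h ⁅X, Z⁆⁆ := by
    rw [leibniz_lie, hXhY, zero_lie, zero_add, hX]
  rw [lie_sub, key, hX, key]

/-- if `X` and `Y` belong to a commutative ideal of
`A_h = {Z : ⁅Z, h W⁆ = h ⁅Z, W⁆ ∀ W}` (so `[X,h] = [Y,h] = 0` and `⁅X, Y⁆ = 0`), then for the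
curvature `R(Y,Z) = v ⁅h Y, h Z⁆`, `v = id - h`, one has `⁅X, R(Y,Z)⁆ = R(Y, ⁅X, Z⁆)` for all
vector fields `Z`. -/
theorem lieDeriv_curvature_commutative_ideal
    (h : χ →ₗ[C^∞⟮I, N; ℝ⟯] χ) (hproj : ∀ X : χ, h (h X) = h X)
    (X Y : χ)
    (hX : ∀ W, ⁅X, h W⁆ = h ⁅X, W⁆)
    (hY : ∀ W, ⁅Y, h W⁆ = h ⁅Y, W⁆)
    (hXY : ⁅X, Y⁆ = 0) :
    ∀ Z : χ, ⁅X, ⁅h Y, h Z⁆ - h ⁅h Y, h Z⁆⁆ = ⁅h Y, h ⁅X, Z⁆⁆ - h ⁅h Y, h ⁅X, Z⁆⁆ := by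
  intro Z
  exact aux_lie (⇑h) X Y Z hX hXY (map_zero h)
end

section
/- Every finite-dimensional Lie algebra 𝔤 over a field of characteristic zero with 𝔤 = [𝔤,𝔤] and semisimple adjoint representation is semisimple. -/
/-- A finite-dimensional Lie algebra over a field of characteristic zero which is
perfect (`⁅L, L⁆ = L`) and whose adjoint representation is semisimple, is semisimple. -/
theorem isSemisimple_of_perfect_of_adjoint_semisimple
    (K : Type*) [Field K] [CharZero K]
    (L : Type*) [LieRing L] [LieAlgebra K L] [Module.Finite K L]
    (hperf : ⁅(⊤ : LieIdeal K L), (⊤ : LieIdeal K L)⁆ = ⊤)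
    (hss : ComplementedLattice (LieSubmodule K L L)) :
    LieAlgebra.IsSemisimple K L := by
  classical
  haveI := hss
  -- the center is trivial
  have hcenterlie : ∀ N : LieIdeal K L, ⁅(LieAlgebra.center K L : LieIdeal K L), N⁆ = ⊥ := by
    intro N
    rw [LieSubmodule.lie_eq_bot_iff]
    intro x hx m _
    rw [LieModule.mem_maxTrivSubmodule] at hx
    rw [← lie_skew, hx m, neg_zero]
  have hcenter : (LieAlgebra.center K L : LieIdeal K L) = ⊥ := by
    obtain ⟨J, hJ⟩ := exists_isCompl (LieAlgebra.center K L : LieIdeal K L)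
    have htop : (⊤ : LieIdeal K L) ≤ J := by
      calc (⊤ : LieIdeal K L) = ⁅(⊤ : LieIdeal K L), (⊤ : LieIdeal K L)⁆ := hperf.symm
        _ = ⁅(LieAlgebra.center K L : LieIdeal K L) ⊔ J,
              (LieAlgebra.center K L : LieIdeal K L) ⊔ J⁆ := by rw [hJ.codisjoint.eq_top]
        _ ≤ J := by
            rw [LieSubmodule.sup_lie, LieSubmodule.lie_sup, LieSubmodule.lie_sup,
              hcenterlie, hcenterlie]
            simp only [bot_sup_eq, sup_le_iff]
            constructor
            · rw [LieSubmodule.lie_comm, hcenterlie]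
              exact bot_le
            · exact LieSubmodule.lie_le_left J J
    have hJtop : J = ⊤ := top_le_iff.mp htop
    have := hJ.disjoint.eq_bot
    rwa [hJtop, inf_top_eq] at this
  -- atoms are not abelian
  have hnonab : ∀ I : LieIdeal K L, IsAtom I → ¬ IsLieAbelian I := by
    intro I hI hab
    apply hI.1
    rw [← le_bot_iff, ← hcenter]
    intro x hx
    rw [LieModule.mem_maxTrivSubmodule]
    intro y
    obtain ⟨J, hJ⟩ := exists_isCompl I
    have hy : y ∈ I ⊔ J := by rw [hJ.codisjoint.eq_top]; trivial
    rw [LieSubmodule.mem_sup] at hy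
    obtain ⟨a, ha, b, hb, rfl⟩ := hy
    have hIab : ⁅I, I⁆ = ⊥ := (LieSubmodule.lie_abelian_iff_lie_self_eq_bot I).mp hab
    have h1 : ⁅a, x⁆ = 0 := by
      have : ⁅a, x⁆ ∈ ⁅I, I⁆ := LieSubmodule.lie_mem_lie ha hx
      rwa [hIab, LieSubmodule.mem_bot] at this
    have h2 : ⁅b, x⁆ = 0 := by
      have hmem : ⁅b, x⁆ ∈ ⁅J, I⁆ := LieSubmodule.lie_mem_lie hb hx
      have : ⁅J, I⁆ = ⊥ := by
        rw [← le_bot_iff, ← hJ.disjoint.eq_bot, LieSubmodule.lie_comm]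
        exact LieSubmodule.lie_le_inf I J
      rwa [this, LieSubmodule.mem_bot] at hmem
    rw [add_lie, h1, h2, add_zero]
  -- atoms equal their own derived ideals
  have hatom_lie : ∀ I : LieIdeal K L, IsAtom I → ⁅I, I⁆ = I := by
    intro I hI
    rcases hI.le_iff.mp (LieSubmodule.lie_le_left I I) with h | h
    · exact absurd ((LieSubmodule.lie_abelian_iff_lie_self_eq_bot I).mpr h) (hnonab I hI)
    · exact h
  constructor
  · exact sSup_atoms_eq_top
  · -- independence of atoms
    intro I hI
    rw [disjoint_iff]
    by_contra hne
    have hle : I ≤ sSup ({J : LieIdeal K L | IsAtom J} \ {I}) :=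
      inf_eq_left.mp ((hI.le_iff.mp inf_le_left).resolve_left hne)
    have hbot : ⁅I, sSup ({J : LieIdeal K L | IsAtom J} \ {I})⁆ = ⊥ := by
      rw [LieSubmodule.lie_eq_bot_iff]
      intro x hx m hm
      rw [sSup_eq_iSup'] at hm
      refine LieSubmodule.iSup_induction (motive := fun m => ⁅x, m⁆ = 0) _ hm ?_ (lie_zero x) ?_
      · rintro ⟨J, hJatom, hJne⟩ m hmJ
        have hIJ : I ⊓ J = ⊥ := by
          rcases hI.le_iff.mp (inf_le_left (a := I) (b := J)) with h | h
          · exact h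
          · exfalso
            apply hJne
            have hIleJ : I ≤ J := h ▸ inf_le_right
            rcases hJatom.le_iff.mp hIleJ with h' | h'
            · exact absurd h' hI.1
            · exact h'.symm ▸ rfl
        have hmem : ⁅x, m⁆ ∈ I ⊓ J := by
          constructor
          · rw [← lie_skew]
            exact neg_mem (I.lie_mem hx)
          · exact J.lie_mem hmJ
        rwa [hIJ, LieSubmodule.mem_bot] at hmem
      · intro a b ha hb
        rw [lie_add, ha, hb, add_zero]
    apply hI.1
    rw [← le_bot_iff]
    calc I = ⁅I, I⁆ := (hatom_lie I hI).symm
      _ ≤ ⁅I, sSup ({J : LieIdeal K L | IsAtom J} \ {I})⁆ :=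
          LieSubmodule.mono_lie_right _ hle
      _ = ⊥ := hbot
  · exact hnonab
end

section
/- Let 𝔤 be a finite-dimensional Lie algebra over a field of characteristic zero such that every derivation is inner. If 𝔤 has a direct-sum decomposition into ideals 𝔤 = 𝔰 ⊕ I with I abelian, I ≠ 0, and 𝔰 = [𝔤,𝔤], then there exists a derivation of 𝔤 with nonzero trace and every inner derivation has trace zero, yielding a contradiction; hence I = 0. -/
/-- Let `L` be a finite-dimensional Lie algebra over a field of characteristic
zero in which every derivation is inner. If `L = s ⊕ i` is a direct sum of Lie ideals with `i`
abelian, `⁅s, i⁆ = 0` and `s = ⁅L, L⁆`, then `i = 0` (otherwise the projection onto `i` would be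
a derivation with nonzero trace, while every inner derivation has trace zero: a contradiction). -/
theorem abelian_complement_of_derived_ideal_trivial_of_inner_derivations
    (K : Type*) [Field K] [CharZero K]
    (L : Type*) [LieRing L] [LieAlgebra K L] [Module.Finite K L]
    (hinner : ∀ D : LieDerivation K L L, ∃ x : L, ∀ y : L, D y = ⁅x, y⁆)
    (s i : LieIdeal K L) (hcompl : IsCompl s i)
    (habel : IsLieAbelian i) (hsi : ⁅s, i⁆ = ⊥)
    (hder : s = ⁅(⊤ : LieIdeal K L), (⊤ : LieIdeal K L)⁆) :
    i = ⊥ := by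
  -- key fact: elements of `i` bracket to zero with everything
  have hkey : ∀ a ∈ i, ∀ b : L, ⁅a, b⁆ = 0 := by
    intro a ha b
    obtain ⟨bs, bi, hbs, hbi, rfl⟩ :=
      Submodule.codisjoint_iff_exists_add_eq.mp
        ((LieSubmodule.codisjoint_toSubmodule).mpr hcompl.codisjoint) b
    have h1 : ⁅bs, a⁆ = 0 := by
      have := LieSubmodule.lie_mem_lie hbs ha
      rw [hsi] at this
      exact this
    have h2 : ⁅a, bi⁆ = 0 := by
      have : ⁅(⟨a, ha⟩ : i), (⟨bi, hbi⟩ : i)⁆ = 0 := trivial_lie_zero _ _ _ _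
      exact congrArg (Subtype.val) this
    rw [lie_add, h2, ← lie_skew a bs, h1]
    simp
  -- the projection onto `i` along `s`
  have hcompl' : IsCompl (i : Submodule K L) (s : Submodule K L) :=
    (LieSubmodule.isCompl_toSubmodule.mpr hcompl).symm
  let p : L →ₗ[K] L :=
    (i : Submodule K L).subtype ∘ₗ Submodule.linearProjOfIsCompl _ _ hcompl'
  have hp_mem : ∀ y, p y ∈ i := fun y => ((Submodule.linearProjOfIsCompl _ _ hcompl') y).2
  have hp_s : ∀ y ∈ s, p y = 0 := by
    intro y hy
    simp only [p, LinearMap.comp_apply]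
    exact congrArg Subtype.val (Submodule.linearProjOfIsCompl_apply_right' hcompl' hy)
  have hp_i : ∀ y ∈ i, p y = y := by
    intro y hy
    simp only [p, LinearMap.comp_apply]
    rw [show y = ((⟨y, hy⟩ : i) : L) from rfl]
    exact congrArg Subtype.val (Submodule.linearProjOfIsCompl_apply_left hcompl' ⟨y, hy⟩)
  -- `p` is a derivation
  have hleib : ∀ a b : L, p ⁅a, b⁆ = ⁅a, p b⁆ - ⁅b, p a⁆ := by
    intro a b
    have hmem : ⁅a, b⁆ ∈ s := by
      rw [hder]
      exact LieSubmodule.lie_mem_lie (LieSubmodule.mem_top a) (LieSubmodule.mem_top b)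
    have h3 : ⁅a, p b⁆ = 0 := by rw [← lie_skew, hkey _ (hp_mem b) a]; simp
    have h4 : ⁅b, p a⁆ = 0 := by rw [← lie_skew, hkey _ (hp_mem a) b]; simp
    rw [hp_s _ hmem, h3, h4]
    simp
  let D : LieDerivation K L L := ⟨p, hleib⟩
  obtain ⟨x, hx⟩ := hinner D
  -- every value of `p` lies in `s ⊓ i = ⊥`
  have hzero : ∀ y : L, p y = 0 := by
    intro y
    have h1 : p y ∈ s := by
      rw [hder]
      have : p y = ⁅x, y⁆ := hx y
      rw [this]
      exact LieSubmodule.lie_mem_lie (LieSubmodule.mem_top x) (LieSubmodule.mem_top y)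
    have h2 : p y ∈ i := hp_mem y
    have hd : s ⊓ i = ⊥ := hcompl.disjoint.eq_bot
    have hm : p y ∈ s ⊓ i := (LieSubmodule.mem_inf _ _ _).mpr ⟨h1, h2⟩
    rw [hd] at hm
    exact (LieSubmodule.mem_bot _).mp hm
  rw [eq_bot_iff]
  intro y hy
  have : p y = y := hp_i y hy
  rw [hzero y] at this
  rw [LieSubmodule.mem_bot]
  exact this.symm
end
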